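/- arXiv:2503.08494 — 4 statements merged into one kernel-verified Lean document; each statement's English description precedes it below -/
import Mathlib

section
/- Let (Ω, F, (F_k)_{k≥0}, P) be a filtered probability space. Let {p_k}, {a_k}, {b_k} be nonnegative integrable random sequences adapted to (F_k), and let {q_k} be a deterministic nonnegative scalar sequence, such that ∑_{k=0}^∞ a_k < ∞ almost surely, ∑_{k=0}^∞ q_k = ∞, ∑_{k=0}^∞ b_k < ∞ almost surely, and for all k ≥ 0, E[p_{k+1} | F_k] ≤ (1 + a_k − q_k)p_k + b_k almost surely. Then lim_{k→∞} p_k = 0 and ∑_{k=0}^∞ q_k p_k < ∞ hold almost surely. -/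
open MeasureTheory Filter
open scoped Topology ENNReal NNReal

namespace RSaux

variable {Ω : Type*}

/-- Product `∏_{j<k} (1 + a_j)`. -/
noncomputable def rsA (a : ℕ → Ω → ℝ) (k : ℕ) (ω : Ω) : ℝ :=
  ∏ j ∈ Finset.range k, (1 + a j ω)

/-- Its inverse `α_k`. -/
noncomputable def rsal (a : ℕ → Ω → ℝ) (k : ℕ) (ω : Ω) : ℝ := (rsA a k ω)⁻¹

/-- The supermartingale `Y`. -/
noncomputable def rsY (p a b : ℕ → Ω → ℝ) (q : ℕ → ℝ) (k : ℕ) (ω : Ω) : ℝ :=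
  rsal a k ω * p k ω +
    ∑ j ∈ Finset.range k, rsal a (j + 1) ω * (q j * p j ω - b j ω)

/-- Partial sums of `b`. -/
noncomputable def rsB (b : ℕ → Ω → ℝ) (k : ℕ) (ω : Ω) : ℝ :=
  ∑ j ∈ Finset.range (k + 1), b j ω

/-- Stopped time capped at `k`. -/
noncomputable def rsm (b : ℕ → Ω → ℝ) (c : ℝ) (k : ℕ) (ω : Ω) : ℕ :=
  sInf {i | i = k ∨ c < rsB b i ω}

/-- Stopped process `Z`. -/
noncomputable def rsZ (p a b : ℕ → Ω → ℝ) (q : ℕ → ℝ) (c : ℝ) (k : ℕ) (ω : Ω) : ℝ :=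
  rsY p a b q (rsm b c k ω) ω

section det

variable {p a b : ℕ → Ω → ℝ} {q : ℕ → ℝ} {c : ℝ}

lemma rsA_succ (a : ℕ → Ω → ℝ) (k : ℕ) (ω : Ω) :
    rsA a (k + 1) ω = rsA a k ω * (1 + a k ω) := Finset.prod_range_succ _ _

lemma one_le_rsA (ha : ∀ k ω, 0 ≤ a k ω) (k : ℕ) (ω : Ω) : 1 ≤ rsA a k ω := by
  unfold rsA
  have h := Finset.prod_le_prod (s := Finset.range k) (f := fun _ => (1:ℝ))
    (g := fun j => 1 + a j ω) (fun i _ => zero_le_one) (fun i _ => by have := ha i ω; linarith)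
  simpa using h

lemma rsA_pos (ha : ∀ k ω, 0 ≤ a k ω) (k : ℕ) (ω : Ω) : 0 < rsA a k ω :=
  lt_of_lt_of_le one_pos (one_le_rsA ha k ω)

lemma rsal_pos (ha : ∀ k ω, 0 ≤ a k ω) (k : ℕ) (ω : Ω) : 0 < rsal a k ω :=
  inv_pos.2 (rsA_pos ha k ω)

lemma rsal_le_one (ha : ∀ k ω, 0 ≤ a k ω) (k : ℕ) (ω : Ω) : rsal a k ω ≤ 1 :=
  inv_le_one_of_one_le₀ (one_le_rsA ha k ω)

lemma rsal_mul (ha : ∀ k ω, 0 ≤ a k ω) (k : ℕ) (ω : Ω) :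
    rsal a (k + 1) ω * (1 + a k ω) = rsal a k ω := by
  have h1 : (0:ℝ) < 1 + a k ω := by linarith [ha k ω]
  rw [rsal, rsal, rsA_succ, mul_inv, mul_assoc, inv_mul_cancel₀ h1.ne', mul_one]

lemma rsal_antitone (ha : ∀ k ω, 0 ≤ a k ω) (ω : Ω) : Antitone fun k => rsal a k ω := by
  refine antitone_nat_of_succ_le fun k => ?_
  rw [← rsal_mul ha k ω]
  nlinarith [rsal_pos ha (k+1) ω, ha k ω]

lemma rsm_le (b : ℕ → Ω → ℝ) (c : ℝ) (k : ℕ) (ω : Ω) : rsm b c k ω ≤ k :=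
  Nat.sInf_le (Or.inl rfl)

lemma rsm_mem (b : ℕ → Ω → ℝ) (c : ℝ) (k : ℕ) (ω : Ω) :
    rsm b c k ω = k ∨ c < rsB b (rsm b c k ω) ω :=
  Nat.sInf_mem (⟨k, Or.inl rfl⟩ : Set.Nonempty {i | i = k ∨ c < rsB b i ω})

lemma rsm_lt_not (b : ℕ → Ω → ℝ) (c : ℝ) (k : ℕ) (ω : Ω) {i : ℕ} (hi : i < rsm b c k ω) :
    i ≠ k ∧ rsB b i ω ≤ c := by
  have := Nat.notMem_of_lt_sInf hi
  simp only [Set.mem_setOf_eq, not_or, not_lt] at this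
  exact this

/-- On the event "no exceedance up to `k`", `rsm k = k`. -/
lemma rsm_eq_self {k : ℕ} {ω : Ω} (hE : ∀ i < k, rsB b i ω ≤ c) : rsm b c k ω = k := by
  rcases lt_or_eq_of_le (rsm_le b c k ω) with h | h
  · rcases rsm_mem b c k ω with h' | h'
    · exact h'
    · exact absurd h' (not_lt.2 (hE _ h))
  · exact h

lemma rsm_eq_iff {k i : ℕ} {ω : Ω} :
    rsm b c k ω = i ↔ (i = k ∨ c < rsB b i ω) ∧ ∀ j < i, j ≠ k ∧ rsB b j ω ≤ c := by
  constructor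
  · rintro rfl
    exact ⟨rsm_mem b c k ω, fun j hj => rsm_lt_not b c k ω hj⟩
  · rintro ⟨h1, h2⟩
    refine le_antisymm (Nat.sInf_le h1) ?_
    by_contra h
    push_neg at h
    have hmem := rsm_mem b c k ω
    rcases hmem with h' | h'
    · exact (h2 _ h).1 h'
    · exact absurd h' (not_lt.2 (h2 _ h).2)

lemma rsm_succ_of_exceed {k : ℕ} {ω : Ω} (hE : ∃ i ≤ k, c < rsB b i ω) :
    rsm b c (k + 1) ω = rsm b c k ω := by
  obtain ⟨i, hik, hi⟩ := hE
  have h1 : rsm b c k ω ≤ i := Nat.sInf_le (Or.inr hi)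
  have h2 : rsm b c (k+1) ω ≤ i := Nat.sInf_le (Or.inr hi)
  have hk : c < rsB b (rsm b c k ω) ω := by
    rcases rsm_mem b c k ω with h | h
    · have : i = k := le_antisymm hik (h ▸ h1)
      rw [h, ← this]; exact hi
    · exact h
  have hk1 : c < rsB b (rsm b c (k+1) ω) ω := by
    rcases rsm_mem b c (k+1) ω with h | h
    · omega
    · exact h
  exact le_antisymm (Nat.sInf_le (Or.inr hk)) (Nat.sInf_le (Or.inr hk1))

end det

section meas

variable {m0 : MeasurableSpace Ω} {μ : Measure Ω} {F : Filtration ℕ m0}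
variable {p a b : ℕ → Ω → ℝ} {q : ℕ → ℝ} {c : ℝ}

lemma rsB_meas (hb : Adapted F b) (k n : ℕ) (hn : n ≤ k) :
    Measurable[F k] (rsB b n) := by
  apply Finset.measurable_sum
  intro j hj
  have hjk : j ≤ k := by
    have := Finset.mem_range.1 hj; omega
  exact ((hb j).mono (F.mono hjk) le_rfl)

lemma rsal_meas (ha : Adapted F a) (k n : ℕ) (hn : n ≤ k + 1) :
    Measurable[F k] (rsal a n) := by
  apply Measurable.inv
  apply Finset.measurable_prod
  intro j hj
  have hjk : j ≤ k := by
    have := Finset.mem_range.1 hj; omega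
  exact (measurable_const.add ((ha j).mono (F.mono hjk) le_rfl))

lemma rsY_sm (hp : Adapted F p) (ha : Adapted F a) (hb : Adapted F b) (k : ℕ) :
    StronglyMeasurable[F k] (rsY p a b q k) := by
  apply Measurable.stronglyMeasurable
  apply Measurable.add
  · exact (rsal_meas ha k k (by omega)).mul (hp k)
  · apply Finset.measurable_sum
    intro j hj
    have hjk : j ≤ k := by have := Finset.mem_range.1 hj; omega
    have hjk' : j < k := Finset.mem_range.1 hj
    exact (rsal_meas ha k (j+1) (by omega)).mul
      ((measurable_const.mul ((hp j).mono (F.mono hjk) le_rfl)).sub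
        ((hb j).mono (F.mono hjk) le_rfl))

lemma rsal_aesm (ha : Adapted F a) (k n : ℕ) (hn : n ≤ k + 1) :
    AEStronglyMeasurable (rsal a n) μ :=
  ((rsal_meas ha k n hn).mono (F.le k) le_rfl).stronglyMeasurable.aestronglyMeasurable

lemma rsal_norm_le (ha0 : ∀ k ω, 0 ≤ a k ω) (n : ℕ) (ω : Ω) : ‖rsal a n ω‖ ≤ 1 := by
  rw [Real.norm_eq_abs, abs_of_pos (rsal_pos ha0 n ω)]
  exact rsal_le_one ha0 n ω

lemma rsY_int (hp : Adapted F p) (ha : Adapted F a) (hb : Adapted F b)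
    (ha0 : ∀ k ω, 0 ≤ a k ω)
    (hp_int : ∀ k, Integrable (p k) μ) (hb_int : ∀ k, Integrable (b k) μ) (k : ℕ) :
    Integrable (rsY p a b q k) μ := by
  apply Integrable.add
  · exact (hp_int k).bdd_mul (rsal_aesm (k := k) ha k le_self_add)
      (Filter.Eventually.of_forall (rsal_norm_le ha0 k))
  · apply integrable_finset_sum
    intro j hj
    have hjk : j + 1 ≤ k + 1 := by have := Finset.mem_range.1 hj; omega
    exact (((hp_int j).const_mul (q j)).sub (hb_int j)).bdd_mul
      (rsal_aesm (k := k) ha (j+1) hjk) (Filter.Eventually.of_forall (rsal_norm_le ha0 (j+1)))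

end meas

section super

variable {m0 : MeasurableSpace Ω} {μ : Measure Ω} {F : Filtration ℕ m0}
variable {p a b : ℕ → Ω → ℝ} {q : ℕ → ℝ} {c : ℝ}

lemma rsY_supermartingale [IsProbabilityMeasure μ]
    (hp : Adapted F p) (ha : Adapted F a) (hb : Adapted F b)
    (hp0 : ∀ k ω, 0 ≤ p k ω) (ha0 : ∀ k ω, 0 ≤ a k ω)
    (hp_int : ∀ k, Integrable (p k) μ) (hb_int : ∀ k, Integrable (b k) μ)
    (hrec : ∀ k : ℕ, ∀ᵐ ω ∂μ,
      (μ[p (k + 1)|F k]) ω ≤ (1 + a k ω - q k) * p k ω + b k ω) :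
    Supermartingale (rsY p a b q) F μ := by
  refine supermartingale_nat (fun k => rsY_sm hp ha hb k)
    (fun k => rsY_int hp ha hb ha0 hp_int hb_int k) (fun k => ?_)
  set C : Ω → ℝ := fun ω =>
    ∑ j ∈ Finset.range (k+1), rsal a (j + 1) ω * (q j * p j ω - b j ω) with hC
  have hC_sm : StronglyMeasurable[F k] C := by
    apply Measurable.stronglyMeasurable
    apply Finset.measurable_sum
    intro j hj
    have hjk : j ≤ k := by have := Finset.mem_range.1 hj; omega
    exact (rsal_meas ha k (j+1) (by omega)).mul
      ((measurable_const.mul ((hp j).mono (F.mono hjk) le_rfl)).sub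
        ((hb j).mono (F.mono hjk) le_rfl))
  have hC_int : Integrable C μ := by
    apply integrable_finset_sum
    intro j hj
    have hjk : j + 1 ≤ k + 1 := by have := Finset.mem_range.1 hj; omega
    exact (((hp_int j).const_mul (q j)).sub (hb_int j)).bdd_mul
      (rsal_aesm (k := k) ha (j+1) hjk) (Filter.Eventually.of_forall (rsal_norm_le ha0 (j+1)))
  have hfg_int : Integrable (fun ω => rsal a (k+1) ω * p (k+1) ω) μ :=
    (hp_int (k+1)).bdd_mul (rsal_aesm (k := k) ha (k+1) le_rfl)
      (Filter.Eventually.of_forall (rsal_norm_le ha0 (k+1)))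
  have hsplit : rsY p a b q (k+1) = (fun ω => rsal a (k+1) ω * p (k+1) ω) + C := rfl
  have h1 : μ[rsY p a b q (k+1)|F k]
      =ᵐ[μ] μ[fun ω => rsal a (k+1) ω * p (k+1) ω|F k] + μ[C|F k] := by
    rw [hsplit]; exact condExp_add hfg_int hC_int _
  have h2 : μ[fun ω => rsal a (k+1) ω * p (k+1) ω|F k]
      =ᵐ[μ] fun ω => rsal a (k+1) ω * (μ[p (k+1)|F k]) ω :=
    condExp_stronglyMeasurable_mul_of_bound (F.le k)
      ((rsal_meas ha k (k+1) le_rfl).stronglyMeasurable) (hp_int (k+1)) 1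
      (Filter.Eventually.of_forall (rsal_norm_le ha0 (k+1)))
  have h3 : μ[C|F k] = C := condExp_of_stronglyMeasurable (F.le k) hC_sm hC_int
  filter_upwards [h1, h2, hrec k] with ω e1 e2 hr
  have key : rsal a (k+1) ω * ((1 + a k ω - q k) * p k ω + b k ω) + C ω
      = rsY p a b q k ω := by
    have e4 := rsal_mul ha0 k ω
    simp only [hC, rsY, Finset.sum_range_succ]
    linear_combination (p k ω) * e4
  have e5 : (μ[rsY p a b q (k+1)|F k]) ω
      = rsal a (k+1) ω * (μ[p (k+1)|F k]) ω + C ω := by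
    rw [e1, Pi.add_apply, e2, h3]
  rw [e5, ← key]
  have hα := (rsal_pos ha0 (k+1) ω).le
  nlinarith [mul_le_mul_of_nonneg_left hr hα]

end super

section stopped

variable {m0 : MeasurableSpace Ω} {μ : Measure Ω} {F : Filtration ℕ m0}
variable {p a b : ℕ → Ω → ℝ} {q : ℕ → ℝ} {c : ℝ}

lemma rsm_set_meas (hb : Adapted F b) (k i : ℕ) (hik : i ≤ k) :
    MeasurableSet[F k] {ω | rsm b c k ω = i} := by
  have hset : {ω | rsm b c k ω = i}
      = ({ω | i = k ∨ c < rsB b i ω} ∩ ⋂ (j : ℕ) (_ : j < i), {ω | j ≠ k ∧ rsB b j ω ≤ c}) := by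
    ext ω
    simp only [Set.mem_setOf_eq, Set.mem_inter_iff, Set.mem_iInter, rsm_eq_iff]
  rw [hset]
  have hBmeas : ∀ j, j ≤ k → Measurable[F k] (rsB b j) := fun j hj => rsB_meas hb k j hj
  apply MeasurableSet.inter
  · rcases eq_or_ne i k with h | h
    · have : {ω : Ω | i = k ∨ c < rsB b i ω} = Set.univ := by ext ω; simp [h]
      rw [this]; exact MeasurableSet.univ
    · have : {ω : Ω | i = k ∨ c < rsB b i ω} = {ω | c < rsB b i ω} := by ext ω; simp [h]
      rw [this]
      exact measurableSet_lt measurable_const (hBmeas i hik)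
  · apply MeasurableSet.iInter; intro j
    apply MeasurableSet.iInter; intro hj
    rcases eq_or_ne j k with h | h
    · have : {ω : Ω | j ≠ k ∧ rsB b j ω ≤ c} = ∅ := by ext ω; simp [h]
      rw [this]; exact @MeasurableSet.empty _ (F k)
    · have : {ω : Ω | j ≠ k ∧ rsB b j ω ≤ c} = {ω | rsB b j ω ≤ c} := by ext ω; simp [h]
      rw [this]
      exact measurableSet_le (hBmeas j (by omega)) measurable_const

lemma rsZ_eq_sum (k : ℕ) (ω : Ω) :
    rsZ p a b q c k ω
      = ∑ i ∈ Finset.range (k+1), ({ω' | rsm b c k ω' = i}.indicator (rsY p a b q i)) ω := by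
  classical
  have hmem : rsm b c k ω ∈ Finset.range (k+1) :=
    Finset.mem_range.2 (by have := rsm_le b c k ω; omega)
  calc rsZ p a b q c k ω
      = if rsm b c k ω ∈ Finset.range (k+1) then rsY p a b q (rsm b c k ω) ω else 0 := by
        rw [if_pos hmem]; rfl
    _ = ∑ i ∈ Finset.range (k+1), if rsm b c k ω = i then rsY p a b q i ω else 0 :=
        (Finset.sum_ite_eq (Finset.range (k+1)) (rsm b c k ω) fun i => rsY p a b q i ω).symm
    _ = _ := by
        refine Finset.sum_congr rfl fun i _ => ?_
        rw [Set.indicator_apply]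
        rfl

lemma rsZ_sm (hp : Adapted F p) (ha : Adapted F a) (hb : Adapted F b) (k : ℕ) :
    StronglyMeasurable[F k] (rsZ p a b q c k) := by
  have hfun : rsZ p a b q c k = fun ω => ∑ i ∈ Finset.range (k+1),
      ({ω' | rsm b c k ω' = i}.indicator (rsY p a b q i)) ω := funext fun ω => rsZ_eq_sum k ω
  rw [hfun]
  apply Measurable.stronglyMeasurable
  apply Finset.measurable_sum
  intro i hi
  have hik : i ≤ k := by have := Finset.mem_range.1 hi; omega
  exact Measurable.indicator ((rsY_sm hp ha hb i).mono (F.mono hik)).measurable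
    (rsm_set_meas hb k i hik)

lemma rsZ_int (hp : Adapted F p) (ha : Adapted F a) (hb : Adapted F b)
    (ha0 : ∀ k ω, 0 ≤ a k ω)
    (hp_int : ∀ k, Integrable (p k) μ) (hb_int : ∀ k, Integrable (b k) μ) (k : ℕ) :
    Integrable (rsZ p a b q c k) μ := by
  have hfun : rsZ p a b q c k = fun ω => ∑ i ∈ Finset.range (k+1),
      ({ω' | rsm b c k ω' = i}.indicator (rsY p a b q i)) ω := funext fun ω => rsZ_eq_sum k ω
  rw [hfun]
  apply integrable_finset_sum
  intro i hi
  have hik : i ≤ k := by have := Finset.mem_range.1 hi; omega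
  exact (rsY_int hp ha hb ha0 hp_int hb_int i).indicator (F.le k _ (rsm_set_meas hb k i hik))

lemma rsZ_succ (k : ℕ) (ω : Ω) :
    rsZ p a b q c (k+1) ω = rsZ p a b q c k ω +
      ({ω' | ∀ i ≤ k, rsB b i ω' ≤ c}.indicator (fun _ => (1:ℝ)) ω) *
        (rsY p a b q (k+1) ω - rsY p a b q k ω) := by
  by_cases hE : ∀ i ≤ k, rsB b i ω ≤ c
  · have h1 : rsm b c k ω = k := rsm_eq_self fun i hi => hE i hi.le
    have h2 : rsm b c (k+1) ω = k+1 := rsm_eq_self fun i hi => hE i (by omega)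
    have hmem : ω ∈ {ω' : Ω | ∀ i ≤ k, rsB b i ω' ≤ c} := hE
    rw [Set.indicator_of_mem hmem]
    simp only [rsZ, h1, h2]
    ring
  · push_neg at hE
    obtain ⟨i, hik, hi⟩ := hE
    have h1 : rsm b c (k+1) ω = rsm b c k ω := rsm_succ_of_exceed ⟨i, hik, hi⟩
    have hmem : ω ∉ {ω' : Ω | ∀ i ≤ k, rsB b i ω' ≤ c} := by
      intro h; exact absurd (h i hik) (not_le.2 hi)
    rw [Set.indicator_of_notMem hmem]
    simp only [rsZ, h1]
    ring

lemma rsE_meas (hb : Adapted F b) (k : ℕ) :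
    MeasurableSet[F k] {ω | ∀ i ≤ k, rsB b i ω ≤ c} := by
  have hset : {ω : Ω | ∀ i ≤ k, rsB b i ω ≤ c}
      = ⋂ (i : ℕ) (_ : i ≤ k), {ω | rsB b i ω ≤ c} := by
    ext ω; simp only [Set.mem_setOf_eq, Set.mem_iInter]
  rw [hset]
  apply MeasurableSet.iInter; intro i
  apply MeasurableSet.iInter; intro hi
  exact measurableSet_le (rsB_meas hb k i hi) measurable_const

lemma rsZ_supermartingale [IsProbabilityMeasure μ]
    (hp : Adapted F p) (ha : Adapted F a) (hb : Adapted F b)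
    (hp0 : ∀ k ω, 0 ≤ p k ω) (ha0 : ∀ k ω, 0 ≤ a k ω)
    (hp_int : ∀ k, Integrable (p k) μ) (hb_int : ∀ k, Integrable (b k) μ)
    (hrec : ∀ k : ℕ, ∀ᵐ ω ∂μ,
      (μ[p (k + 1)|F k]) ω ≤ (1 + a k ω - q k) * p k ω + b k ω) :
    Supermartingale (rsZ p a b q c) F μ := by
  have hY := rsY_supermartingale hp ha hb hp0 ha0 hp_int hb_int hrec
  have hYint := fun k => rsY_int (q := q) (μ := μ) hp ha hb ha0 hp_int hb_int k
  have hZint := fun k => rsZ_int (q := q) (μ := μ) (c := c) hp ha hb ha0 hp_int hb_int k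
  refine supermartingale_nat (fun k => rsZ_sm hp ha hb k) hZint (fun k => ?_)
  set E : Set Ω := {ω | ∀ i ≤ k, rsB b i ω ≤ c} with hEdef
  have hEmeas : MeasurableSet[F k] E := rsE_meas hb k
  set g : Ω → ℝ := fun ω => (E.indicator (fun _ => (1:ℝ)) ω) *
      (rsY p a b q (k+1) ω - rsY p a b q k ω) with hgdef
  have hsplit : rsZ p a b q c (k+1) = rsZ p a b q c k + g := funext fun ω => rsZ_succ k ω
  have hind_sm : StronglyMeasurable[F k] (E.indicator (fun _ => (1:ℝ))) :=
    stronglyMeasurable_const.indicator hEmeas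
  have hind_bd : ∀ ω, ‖E.indicator (fun _ => (1:ℝ)) ω‖ ≤ 1 := by
    intro ω; rw [Set.indicator_apply]; split <;> simp
  have hind_nonneg : ∀ ω, 0 ≤ E.indicator (fun _ => (1:ℝ)) ω := by
    intro ω; rw [Set.indicator_apply]; split <;> simp
  have hYd_int : Integrable (fun ω => rsY p a b q (k+1) ω - rsY p a b q k ω) μ :=
    (hYint (k+1)).sub (hYint k)
  have hg_int : Integrable g μ :=
    hYd_int.bdd_mul ((hind_sm.mono (F.le k)).aestronglyMeasurable) (Filter.Eventually.of_forall hind_bd)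
  have h1 : μ[rsZ p a b q c (k+1)|F k] =ᵐ[μ] μ[rsZ p a b q c k|F k] + μ[g|F k] := by
    rw [hsplit]; exact condExp_add (hZint k) hg_int _
  have h2 : μ[rsZ p a b q c k|F k] = rsZ p a b q c k :=
    condExp_of_stronglyMeasurable (F.le k) (rsZ_sm hp ha hb k) (hZint k)
  have h3 : μ[g|F k] =ᵐ[μ] fun ω => E.indicator (fun _ => (1:ℝ)) ω *
      (μ[fun ω' => rsY p a b q (k+1) ω' - rsY p a b q k ω'|F k]) ω :=
    condExp_stronglyMeasurable_mul_of_bound (F.le k) hind_sm hYd_int 1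
      (Filter.Eventually.of_forall hind_bd)
  have h4 : μ[fun ω' => rsY p a b q (k+1) ω' - rsY p a b q k ω'|F k]
      =ᵐ[μ] μ[rsY p a b q (k+1)|F k] - μ[rsY p a b q k|F k] :=
    condExp_sub (hYint (k+1)) (hYint k) _
  have h5 : μ[rsY p a b q k|F k] = rsY p a b q k :=
    condExp_of_stronglyMeasurable (F.le k) (rsY_sm hp ha hb k) (hYint k)
  have h6 : μ[rsY p a b q (k+1)|F k] ≤ᵐ[μ] rsY p a b q k := hY.2.1 k (k+1) (Nat.le_succ k)
  filter_upwards [h1, h3, h4, h6] with ω e1 e3 e4 e6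
  rw [e1, Pi.add_apply, h2, e3, e4, Pi.sub_apply, h5]
  have := hind_nonneg ω
  nlinarith [mul_le_mul_of_nonneg_left (sub_nonpos.2 e6) this]

end stopped

section bounds

variable {m0 : MeasurableSpace Ω} {μ : Measure Ω} {F : Filtration ℕ m0}
variable {p a b : ℕ → Ω → ℝ} {q : ℕ → ℝ} {c : ℝ}

lemma rsY_ge (hp0 : ∀ k ω, 0 ≤ p k ω) (ha0 : ∀ k ω, 0 ≤ a k ω)
    (hb0 : ∀ k ω, 0 ≤ b k ω) (hq0 : ∀ k, 0 ≤ q k) (k : ℕ) (ω : Ω) :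
    -(∑ j ∈ Finset.range k, b j ω) ≤ rsY p a b q k ω := by
  unfold rsY
  have h1 : 0 ≤ rsal a k ω * p k ω := mul_nonneg (rsal_pos ha0 k ω).le (hp0 k ω)
  have h2 : ∀ j ∈ Finset.range k, -(b j ω) ≤ rsal a (j+1) ω * (q j * p j ω - b j ω) := by
    intro j _
    have hα0 := (rsal_pos ha0 (j+1) ω).le
    have hα1 := rsal_le_one ha0 (j+1) ω
    have hqp : 0 ≤ q j * p j ω := mul_nonneg (hq0 j) (hp0 j ω)
    nlinarith [hb0 j ω]
  have h3 := Finset.sum_le_sum h2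
  rw [Finset.sum_neg_distrib] at h3
  linarith

lemma rsZ_ge (hp0 : ∀ k ω, 0 ≤ p k ω) (ha0 : ∀ k ω, 0 ≤ a k ω)
    (hb0 : ∀ k ω, 0 ≤ b k ω) (hq0 : ∀ k, 0 ≤ q k) (hc : 0 ≤ c) (k : ℕ) (ω : Ω) :
    -c ≤ rsZ p a b q c k ω := by
  have h := rsY_ge (q := q) hp0 ha0 hb0 hq0 (rsm b c k ω) ω
  have hs : ∑ j ∈ Finset.range (rsm b c k ω), b j ω ≤ c := by
    cases hm : rsm b c k ω with
    | zero => simpa using hc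
    | succ m =>
      have hlt : m < rsm b c k ω := by omega
      have h2 := (rsm_lt_not b c k ω hlt).2
      unfold rsB at h2
      exact h2
  unfold rsZ
  linarith

lemma rsZ_zero (ω : Ω) : rsZ p a b q c 0 ω = p 0 ω := by
  have h0 : rsm b c 0 ω = 0 := Nat.le_zero.1 (rsm_le b c 0 ω)
  simp [rsZ, h0, rsY, rsal, rsA]

lemma rsZ_tendsto [IsProbabilityMeasure μ]
    (hp : Adapted F p) (ha : Adapted F a) (hb : Adapted F b)
    (hp0 : ∀ k ω, 0 ≤ p k ω) (ha0 : ∀ k ω, 0 ≤ a k ω)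
    (hb0 : ∀ k ω, 0 ≤ b k ω) (hq0 : ∀ k, 0 ≤ q k)
    (hp_int : ∀ k, Integrable (p k) μ) (hb_int : ∀ k, Integrable (b k) μ)
    (hrec : ∀ k : ℕ, ∀ᵐ ω ∂μ,
      (μ[p (k + 1)|F k]) ω ≤ (1 + a k ω - q k) * p k ω + b k ω)
    (hc : 0 ≤ c) :
    ∀ᵐ ω ∂μ, ∃ l, Tendsto (fun k => rsZ p a b q c k ω) atTop (𝓝 l) := by
  have hZ := rsZ_supermartingale (c := c) hp ha hb hp0 ha0 hp_int hb_int hrec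
  have hZint := fun k => rsZ_int (q := q) (μ := μ) (c := c) hp ha hb ha0 hp_int hb_int k
  have hsub : Submartingale (-(rsZ p a b q c)) F μ := hZ.neg
  set R : ℝ≥0 := (∫ ω, p 0 ω ∂μ + 2*c).toNNReal with hR
  have hbdd : ∀ n, eLpNorm ((-(rsZ p a b q c)) n) 1 μ ≤ R := by
    intro n
    have hneg : (-(rsZ p a b q c)) n = -(rsZ p a b q c n) := rfl
    rw [hneg, eLpNorm_neg]
    have hintle : ∫ ω, rsZ p a b q c n ω ∂μ ≤ ∫ ω, p 0 ω ∂μ := by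
      have h6 := hZ.2.1 0 n (Nat.zero_le n)
      have h7 := integral_mono_ae integrable_condExp (hZint 0) h6
      rw [integral_condExp (F.le 0)] at h7
      have h8 : ∫ ω, rsZ p a b q c 0 ω ∂μ = ∫ ω, p 0 ω ∂μ := by
        congr 1; funext ω; exact rsZ_zero ω
      linarith
    have habs : ∀ ω, ‖rsZ p a b q c n ω‖ ≤ rsZ p a b q c n ω + 2*c := by
      intro ω
      have := rsZ_ge (q := q) hp0 ha0 hb0 hq0 hc n ω
      rw [Real.norm_eq_abs, abs_le]
      constructor <;> linarith
    have hmono : ∫ ω, ‖rsZ p a b q c n ω‖ ∂μ ≤ ∫ ω, (rsZ p a b q c n ω + 2*c) ∂μ :=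
      integral_mono (hZint n).norm ((hZint n).add (integrable_const _))
        (fun ω => habs ω)
    rw [integral_add (hZint n) (integrable_const _), integral_const, probReal_univ,
      smul_eq_mul, one_mul] at hmono
    rw [eLpNorm_one_eq_lintegral_enorm, ← ofReal_integral_norm_eq_lintegral_enorm (hZint n)]
    have hcoe : (R : ℝ≥0∞) = ENNReal.ofReal (∫ ω, p 0 ω ∂μ + 2*c) := by
      rw [hR]; rfl
    rw [hcoe]
    exact ENNReal.ofReal_le_ofReal (le_trans hmono (by linarith))
  have hconv := hsub.exists_ae_tendsto_of_bdd hbdd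
  filter_upwards [hconv] with ω hl
  obtain ⟨l, hl⟩ := hl
  refine ⟨-l, ?_⟩
  have : (fun k => rsZ p a b q c k ω) = fun k => -((-(rsZ p a b q c)) k ω) := by
    funext k; simp
  rw [this]
  exact hl.neg

end bounds

section final

variable {m0 : MeasurableSpace Ω}
variable {p a b : ℕ → Ω → ℝ} {q : ℕ → ℝ}

lemma rs_final {ω : Ω}
    (hp0 : ∀ k ω, 0 ≤ p k ω) (ha0 : ∀ k ω, 0 ≤ a k ω) (hb0 : ∀ k ω, 0 ≤ b k ω)
    (hq0 : ∀ k, 0 ≤ q k) (hq_div : ¬ Summable q)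
    (hsa : Summable fun k => a k ω) (hsb : Summable fun k => b k ω)
    (hYconv : ∃ l, Tendsto (fun k => rsY p a b q k ω) atTop (𝓝 l)) :
    Tendsto (fun k => p k ω) atTop (𝓝 0) ∧ Summable fun k => q k * p k ω := by
  obtain ⟨l, hY⟩ := hYconv
  -- the product A converges
  have hAmono : Monotone fun k => rsA a k ω := by
    apply monotone_nat_of_le_succ
    intro k
    rw [rsA_succ]
    nlinarith [rsA_pos ha0 k ω, ha0 k ω]
  have hAbdd : ∀ k, rsA a k ω ≤ Real.exp (∑' j, a j ω) := by
    intro k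
    have h1 : rsA a k ω ≤ ∏ j ∈ Finset.range k, Real.exp (a j ω) := by
      apply Finset.prod_le_prod
      · intro j _; nlinarith [ha0 j ω]
      · intro j _; linarith [Real.add_one_le_exp (a j ω)]
    rw [← Real.exp_sum] at h1
    exact h1.trans (Real.exp_le_exp.2 (hsa.sum_le_tsum (Finset.range k)
      (fun j _ => ha0 j ω)))
  have hbdd : BddAbove (Set.range fun k => rsA a k ω) := by
    refine ⟨Real.exp (∑' j, a j ω), ?_⟩
    rintro x ⟨k, rfl⟩
    exact hAbdd k
  set LA := ⨆ k, rsA a k ω with hLAdef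
  have hAtend : Tendsto (fun k => rsA a k ω) atTop (𝓝 LA) := tendsto_atTop_ciSup hAmono hbdd
  have hALA : ∀ k, rsA a k ω ≤ LA := fun k => le_ciSup hbdd k
  have hLA1 : 1 ≤ LA := by
    have := hALA 0
    have h0 : rsA a 0 ω = 1 := by simp [rsA]
    linarith [le_ciSup hbdd 0, h0 ▸ le_ciSup hbdd 0]
  have hLApos : 0 < LA := by linarith
  have hαtend : Tendsto (fun k => rsal a k ω) atTop (𝓝 LA⁻¹) := hAtend.inv₀ (by positivity)
  have hαge : ∀ k, LA⁻¹ ≤ rsal a k ω := fun k =>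
    inv_anti₀ (rsA_pos ha0 k ω) (hALA k)
  -- T converges
  have hTsum : Summable fun j => rsal a (j+1) ω * b j ω := by
    refine Summable.of_nonneg_of_le
      (fun j => mul_nonneg (rsal_pos ha0 (j+1) ω).le (hb0 j ω)) (fun j => ?_) hsb
    nlinarith [rsal_le_one ha0 (j+1) ω, hb0 j ω, rsal_pos ha0 (j+1) ω]
  have hTtend : Tendsto (fun k => ∑ j ∈ Finset.range k, rsal a (j+1) ω * b j ω) atTop
      (𝓝 (∑' j, rsal a (j+1) ω * b j ω)) := hTsum.hasSum.tendsto_sum_nat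
  set T := ∑' j, rsal a (j+1) ω * b j ω with hTdef
  -- U = Y + T converges
  set U : ℕ → ℝ := fun k => rsal a k ω * p k ω +
    ∑ j ∈ Finset.range k, rsal a (j+1) ω * (q j * p j ω) with hUdef
  have hUeq : ∀ k, U k = rsY p a b q k ω +
      ∑ j ∈ Finset.range k, rsal a (j+1) ω * b j ω := by
    intro k
    simp only [hUdef, rsY, add_assoc]
    congr 1
    rw [← Finset.sum_add_distrib]
    exact Finset.sum_congr rfl fun j _ => by ring
  have hUtend : Tendsto U atTop (𝓝 (l + T)) := by
    have h := hY.add hTtend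
    have : U = fun k => rsY p a b q k ω + ∑ j ∈ Finset.range k, rsal a (j+1) ω * b j ω :=
      funext hUeq
    rw [this]
    exact h
  -- S is summable
  obtain ⟨M, hM⟩ := hUtend.bddAbove_range
  have hSsum : Summable fun j => rsal a (j+1) ω * (q j * p j ω) := by
    apply summable_of_sum_range_le
      (fun j => mul_nonneg (rsal_pos ha0 (j+1) ω).le (mul_nonneg (hq0 j) (hp0 j ω)))
    intro k
    have h1 : ∑ j ∈ Finset.range k, rsal a (j+1) ω * (q j * p j ω) ≤ U k := by
      simp only [hUdef]
      nlinarith [mul_nonneg (rsal_pos ha0 k ω).le (hp0 k ω)]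
    exact h1.trans (hM ⟨k, rfl⟩)
  -- the second conclusion
  have hqp : Summable fun j => q j * p j ω := by
    refine Summable.of_nonneg_of_le (fun j => mul_nonneg (hq0 j) (hp0 j ω))
      (fun j => ?_) (hSsum.mul_left LA)
    have h1 := hαge (j+1)
    have h2 : 0 ≤ q j * p j ω := mul_nonneg (hq0 j) (hp0 j ω)
    have h3 : LA⁻¹ * LA = 1 := inv_mul_cancel₀ (ne_of_gt hLApos)
    nlinarith [mul_le_mul_of_nonneg_left h1 (mul_nonneg hLApos.le h2)]
  -- α p converges
  have hStend := hSsum.hasSum.tendsto_sum_nat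
  set S := ∑' j, rsal a (j+1) ω * (q j * p j ω) with hSdef
  have hαp : Tendsto (fun k => rsal a k ω * p k ω) atTop (𝓝 (l + T - S)) := by
    have h := hUtend.sub hStend
    have heq : (fun k => U k - ∑ j ∈ Finset.range k, rsal a (j+1) ω * (q j * p j ω))
        = fun k => rsal a k ω * p k ω := by
      funext k; simp only [hUdef]; ring
    rwa [heq] at h
  -- p converges
  have hptend : Tendsto (fun k => p k ω) atTop (𝓝 (LA * (l + T - S))) := by
    have h := hAtend.mul hαp
    have heq : (fun k => rsA a k ω * (rsal a k ω * p k ω)) = fun k => p k ω := by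
      funext k
      rw [rsal, ← mul_assoc, mul_inv_cancel₀ (ne_of_gt (rsA_pos ha0 k ω)), one_mul]
    rwa [heq] at h
  set P := LA * (l + T - S) with hPdef
  have hPnn : 0 ≤ P := ge_of_tendsto' hptend fun k => hp0 k ω
  have hP0 : P = 0 := by
    by_contra hne
    have hP : 0 < P := lt_of_le_of_ne hPnn (Ne.symm hne)
    have hev : ∀ᶠ k in atTop, P/2 < p k ω := hptend.eventually_const_lt (by linarith)
    obtain ⟨N, hN⟩ := eventually_atTop.1 hev
    have h1 : Summable fun k => q (k + N) := by
      refine Summable.of_nonneg_of_le (fun k => hq0 _) (fun k => ?_)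
        (((summable_nat_add_iff N).2 hqp).mul_left (2/P))
      have h2 := hN (k + N) (Nat.le_add_left N k)
      have h3 := hq0 (k + N)
      have h4 : (0:ℝ) < 2/P := by positivity
      have h5 : 2/P * (P/2) = 1 := by field_simp
      have h6 : q (k+N) * (P/2) ≤ q (k+N) * p (k+N) ω :=
        mul_le_mul_of_nonneg_left h2.le h3
      have h7 : 2/P * (q (k+N) * (P/2)) ≤ 2/P * (q (k+N) * p (k+N) ω) :=
        mul_le_mul_of_nonneg_left h6 h4.le
      calc q (k+N) = 2/P * (P/2) * q (k+N) := by rw [h5]; ring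
        _ = 2/P * (q (k+N) * (P/2)) := by ring
        _ ≤ 2/P * (q (k+N) * p (k+N) ω) := h7
    exact hq_div ((summable_nat_add_iff N).1 h1)
  rw [hP0] at hptend
  exact ⟨hptend, hqp⟩

end final

end RSaux

/-- Robbins–Siegmund-type lemma. If nonnegative adapted integrable
sequences `p, a, b` and a deterministic nonnegative sequence `q` satisfy
`∑ a_k < ∞` a.s., `∑ q_k = ∞`, `∑ b_k < ∞` a.s., and
`E[p_{k+1} | F_k] ≤ (1 + a_k - q_k) p_k + b_k` a.s. for all `k`, then almost surely
`p_k → 0` and `∑ q_k p_k < ∞`. -/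
theorem robbins_siegmund_with_divergent_q
    {Ω : Type*} {m0 : MeasurableSpace Ω} (μ : Measure Ω) [IsProbabilityMeasure μ]
    (F : Filtration ℕ m0)
    (p a b : ℕ → Ω → ℝ) (q : ℕ → ℝ)
    (hp_adapted : Adapted F p) (ha_adapted : Adapted F a) (hb_adapted : Adapted F b)
    (hp_nonneg : ∀ k ω, 0 ≤ p k ω) (ha_nonneg : ∀ k ω, 0 ≤ a k ω)
    (hb_nonneg : ∀ k ω, 0 ≤ b k ω) (hq_nonneg : ∀ k, 0 ≤ q k)
    (hp_int : ∀ k, Integrable (p k) μ) (ha_int : ∀ k, Integrable (a k) μ)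
    (hb_int : ∀ k, Integrable (b k) μ)
    (ha_sum : ∀ᵐ ω ∂μ, Summable fun k => a k ω)
    (hq_div : ¬ Summable q)
    (hb_sum : ∀ᵐ ω ∂μ, Summable fun k => b k ω)
    (hrec : ∀ k : ℕ, ∀ᵐ ω ∂μ,
      (μ[p (k + 1)|F k]) ω ≤ (1 + a k ω - q k) * p k ω + b k ω) :
    ∀ᵐ ω ∂μ, Tendsto (fun k => p k ω) atTop (nhds 0) ∧
      Summable fun k => q k * p k ω := by
  have hbig : ∀ᵐ ω ∂μ, ∀ n : ℕ,
      ∃ l, Tendsto (fun k => RSaux.rsZ p a b q (n:ℝ) k ω) atTop (𝓝 l) :=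
    ae_all_iff.2 fun n => RSaux.rsZ_tendsto hp_adapted ha_adapted hb_adapted
      hp_nonneg ha_nonneg hb_nonneg hq_nonneg hp_int hb_int hrec (Nat.cast_nonneg n)
  filter_upwards [ha_sum, hb_sum, hbig] with ω hsa hsb hz
  have hYconv : ∃ l, Tendsto (fun k => RSaux.rsY p a b q k ω) atTop (𝓝 l) := by
    obtain ⟨n, hn⟩ := exists_nat_ge (∑' j, b j ω)
    obtain ⟨l, hl⟩ := hz n
    refine ⟨l, ?_⟩
    have heq : (fun k => RSaux.rsZ p a b q (n:ℝ) k ω)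
        = fun k => RSaux.rsY p a b q k ω := by
      funext k
      unfold RSaux.rsZ
      rw [RSaux.rsm_eq_self]
      intro i _
      calc RSaux.rsB b i ω ≤ ∑' j, b j ω :=
            hsb.sum_le_tsum _ (fun j _ => hb_nonneg j ω)
        _ ≤ n := hn
    rwa [heq] at hl
  exact RSaux.rs_final hp_nonneg ha_nonneg hb_nonneg hq_nonneg hq_div hsa hsb hYconv
end

section
/- Let (Ω, F, (F_k)_{k≥0}, P) be a filtered probability space. Let {p_k}, {u_k}, {a_k}, {b_k} be nonnegative integrable random sequences adapted to (F_k) such that ∑_{k=0}^∞ a_k < ∞ almost surely, ∑_{k=0}^∞ b_k < ∞ almost surely, and for all k ≥ 0, E[p_{k+1} | F_k] ≤ (1 + a_k)p_k − u_k + b_k almost surely. Then ∑_{k=0}^∞ u_k < ∞ almost surely and p_k converges almost surely to a nonnegative random variable v. -/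
open MeasureTheory Filter

theorem rs_core
    {Ω : Type*} {m0 : MeasurableSpace Ω} (μ : Measure Ω) [IsProbabilityMeasure μ]
    (F : Filtration ℕ m0)
    (q u b : ℕ → Ω → ℝ)
    (hq_adapted : StronglyAdapted F q) (hu_adapted : StronglyAdapted F u) (hb_adapted : StronglyAdapted F b)
    (hq_nonneg : ∀ k ω, 0 ≤ q k ω) (hu_nonneg : ∀ k ω, 0 ≤ u k ω)
    (hb_nonneg : ∀ k ω, 0 ≤ b k ω)
    (hq_int : ∀ k, Integrable (q k) μ) (hu_int : ∀ k, Integrable (u k) μ)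
    (hb_int : ∀ k, Integrable (b k) μ)
    (hb_sum : ∀ᵐ ω ∂μ, Summable fun k => b k ω)
    (hrec : ∀ k : ℕ, ∀ᵐ ω ∂μ, (μ[q (k + 1)|F k]) ω ≤ q k ω - u k ω + b k ω) :
    ∀ᵐ ω ∂μ, (Summable fun k => u k ω) ∧
      ∃ l, 0 ≤ l ∧ Tendsto (fun k => q k ω) atTop (nhds (l)) := by
  classical
  -- the increment process
  set D : ℕ → Ω → ℝ := fun k ω => q (k+1) ω - q k ω + u k ω - b k ω with hD
  -- indicator processes and stopped supermartingales, for each threshold `c`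
  set χ : ℕ → ℕ → Ω → ℝ := fun c k ω =>
    if (∑ j ∈ Finset.range (k+1), b j ω) ≤ (c : ℝ) then 1 else 0 with hχ
  set S : ℕ → ℕ → Ω → ℝ := fun c k ω =>
    q 0 ω + ∑ j ∈ Finset.range k, χ c j ω * D j ω with hS
  have hχ01 : ∀ c k ω, χ c k ω = 0 ∨ χ c k ω = 1 := by
    intro c k ω; by_cases h : (∑ j ∈ Finset.range (k+1), b j ω) ≤ (c:ℝ) <;>
      simp [hχ, h]
  have hχ_nonneg : ∀ c k ω, 0 ≤ χ c k ω := by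
    intro c k ω; rcases hχ01 c k ω with h | h <;> simp [h]
  have hχ_le_one : ∀ c k ω, χ c k ω ≤ 1 := by
    intro c k ω; rcases hχ01 c k ω with h | h <;> simp [h]
  have hχ_one_iff : ∀ c k ω, χ c k ω = 1 ↔ (∑ j ∈ Finset.range (k+1), b j ω) ≤ (c:ℝ) := by
    intro c k ω
    by_cases h : (∑ j ∈ Finset.range (k+1), b j ω) ≤ (c:ℝ) <;> simp [hχ, h]
  have hχ_anti : ∀ c j k ω, j ≤ k → χ c k ω = 1 → χ c j ω = 1 := by
    intro c j k ω hjk h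
    rw [hχ_one_iff] at h ⊢
    refine le_trans ?_ h
    exact Finset.sum_le_sum_of_subset_of_nonneg
      (Finset.range_subset_range.2 (by omega)) (fun i _ _ => hb_nonneg i ω)
  -- measurability of χ
  have hχ_meas : ∀ c k, StronglyMeasurable[F k] (χ c k) := by
    intro c k
    apply Measurable.stronglyMeasurable
    refine Measurable.ite ?_ measurable_const measurable_const
    refine measurableSet_le ?_ measurable_const
    exact Finset.measurable_sum _ fun j hj =>
      ((hb_adapted j).mono (F.mono (by
        have := Finset.mem_range.1 hj; omega))).measurable
  have hχ_meas0 : ∀ c k, AEStronglyMeasurable (χ c k) μ :=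
    fun c k => ((hχ_meas c k).mono (F.le k)).aestronglyMeasurable
  -- integrability
  have hD_int : ∀ k, Integrable (D k) μ := fun k =>
    (((hq_int (k+1)).sub (hq_int k)).add (hu_int k)).sub (hb_int k)
  have hχD_int : ∀ c k, Integrable (fun ω => χ c k ω * D k ω) μ := by
    intro c k
    exact (hD_int k).bdd_mul (c := 1) (hχ_meas0 c k) (ae_of_all _ fun ω => by
      rw [Real.norm_eq_abs, abs_of_nonneg (hχ_nonneg c k ω)]; exact hχ_le_one c k ω)
  have hS_int : ∀ c k, Integrable (S c k) μ := by
    intro c k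
    exact (hq_int 0).add (integrable_finset_sum _ fun j _ => hχD_int c j)
  -- adaptedness of S
  have hS_adp : ∀ c, StronglyAdapted F (S c) := by
    intro c k
    refine StronglyMeasurable.add ((hq_adapted 0).mono (F.mono (Nat.zero_le k))) ?_
    refine Finset.stronglyMeasurable_fun_sum _ fun j hj => ?_
    have hjk : j < k := Finset.mem_range.1 hj
    have hqm : ∀ i, i ≤ k → StronglyMeasurable[F k] (q i) :=
      fun i hi => (hq_adapted i).mono (F.mono hi)
    exact ((hχ_meas c j).mono (F.mono hjk.le)).mul
      ((((hqm (j+1) hjk).sub (hqm j hjk.le)).add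
        ((hu_adapted j).mono (F.mono hjk.le))).sub ((hb_adapted j).mono (F.mono hjk.le)))
  -- one-step supermartingale inequality
  have hstep : ∀ c k, μ[S c (k+1)|F k] ≤ᵐ[μ] S c k := by
    intro c k
    have hSsucc : S c (k+1) = S c k + fun ω => χ c k ω * D k ω := by
      funext ω; simp [hS, Finset.sum_range_succ, add_assoc]
    set g : Ω → ℝ := fun ω => q k ω - u k ω + b k ω with hg
    have hg_int : Integrable g μ := ((hq_int k).sub (hu_int k)).add (hb_int k)
    have hg_meas : StronglyMeasurable[F k] g :=
      ((hq_adapted k).sub (hu_adapted k)).add (hb_adapted k)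
    have hDeq : D k = q (k+1) - g := by
      funext ω; simp [hD, hg]; ring
    have hcondg : μ[g|F k] = g := condExp_of_stronglyMeasurable (F.le k) hg_meas hg_int
    have hcondD : μ[D k|F k] =ᵐ[μ] fun ω => (μ[q (k+1)|F k]) ω - g ω := by
      rw [hDeq]
      refine (condExp_sub (hq_int (k+1)) hg_int (F k)).trans ?_
      rw [hcondg]
      exact Filter.EventuallyEq.rfl
    have e1 : μ[S c (k+1)|F k] =ᵐ[μ] μ[S c k|F k] + μ[(fun ω => χ c k ω * D k ω)|F k] := by
      rw [hSsucc]
      exact condExp_add (hS_int c k) (hχD_int c k) (F k)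
    have e2 : μ[(fun ω => χ c k ω * D k ω)|F k] =ᵐ[μ] fun ω => χ c k ω * (μ[D k|F k]) ω :=
      condExp_mul_of_stronglyMeasurable_left (hχ_meas c k) (hχD_int c k) (hD_int k)
    have e0 : μ[S c k|F k] = S c k :=
      condExp_of_stronglyMeasurable (F.le k) (hS_adp c k) (hS_int c k)
    filter_upwards [e1, e2, hcondD, hrec k] with ω h1 h2 h3 h4
    rw [h1, Pi.add_apply, e0, h2, h3]
    have hgw : (μ[q (k + 1)|F k]) ω - g ω ≤ 0 := by simp [hg]; linarith
    nlinarith [hχ_nonneg c k ω, mul_nonneg (hχ_nonneg c k ω) (neg_nonneg.2 hgw)]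
  have hSmart : ∀ c, Supermartingale (S c) F μ := fun c =>
    supermartingale_nat (hS_adp c) (hS_int c) (hstep c)
  -- pointwise structure of the stopped process
  have hkey : ∀ c k ω, (∑ j ∈ Finset.range k, χ c j ω * b j ω ≤ (c:ℝ)) ∧
      ∃ m, S c k ω = q m ω + ∑ j ∈ Finset.range k, χ c j ω * u j ω
        - ∑ j ∈ Finset.range k, χ c j ω * b j ω := by
    intro c k ω
    induction k with
    | zero => exact ⟨by simp, 0, by simp [hS]⟩
    | succ k ih =>
      rcases hχ01 c k ω with h0 | h1
      · obtain ⟨hble, m, hm⟩ := ih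
        refine ⟨?_, m, ?_⟩
        · rw [Finset.sum_range_succ, h0]; simpa using hble
        · have hS' : S c (k+1) ω = S c k ω + χ c k ω * D k ω := by
            simp [hS, Finset.sum_range_succ, add_assoc]
          rw [hS', hm, Finset.sum_range_succ, Finset.sum_range_succ
            (fun j => χ c j ω * b j ω), h0]
          ring
      · have hall : ∀ j ∈ Finset.range (k+1), χ c j ω = 1 := fun j hj =>
          hχ_anti c j k ω (by have := Finset.mem_range.1 hj; omega) h1
        have hbs : ∑ j ∈ Finset.range (k+1), χ c j ω * b j ω
            = ∑ j ∈ Finset.range (k+1), b j ω :=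
          Finset.sum_congr rfl fun j hj => by rw [hall j hj, one_mul]
        have hus : ∑ j ∈ Finset.range (k+1), χ c j ω * u j ω
            = ∑ j ∈ Finset.range (k+1), u j ω :=
          Finset.sum_congr rfl fun j hj => by rw [hall j hj, one_mul]
        refine ⟨by rw [hbs]; exact (hχ_one_iff c k ω).1 h1, k+1, ?_⟩
        have hSe : S c (k+1) ω = q 0 ω + ∑ j ∈ Finset.range (k+1), D j ω := by
          simp only [hS]
          congr 1
          exact Finset.sum_congr rfl fun j hj => by rw [hall j hj, one_mul]
        have htel : ∑ j ∈ Finset.range (k+1), (q (j+1) ω - q j ω)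
            = q (k+1) ω - q 0 ω := Finset.sum_range_sub (fun j => q j ω) (k+1)
        have hDs : ∑ j ∈ Finset.range (k+1), D j ω
            = (q (k+1) ω - q 0 ω) + ∑ j ∈ Finset.range (k+1), u j ω
              - ∑ j ∈ Finset.range (k+1), b j ω := by
          rw [← htel, ← Finset.sum_add_distrib, ← Finset.sum_sub_distrib]
        rw [hSe, hDs, hbs, hus]; ring
  have hS_lb : ∀ (c k : ℕ) (ω : Ω), -(c:ℝ) ≤ S c k ω := by
    intro c k ω
    obtain ⟨hble, m, hm⟩ := hkey c k ω
    have hus : 0 ≤ ∑ j ∈ Finset.range k, χ c j ω * u j ω :=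
      Finset.sum_nonneg fun j _ => mul_nonneg (hχ_nonneg c j ω) (hu_nonneg j ω)
    rw [hm]; linarith [hq_nonneg m ω]
  -- expectation bound
  have hSint_le : ∀ c k, ∫ ω, S c k ω ∂μ ≤ ∫ ω, q 0 ω ∂μ := by
    intro c k
    have h := (hSmart c).setIntegral_le (Nat.zero_le k) (MeasurableSet.univ (α := Ω))
    simp only [setIntegral_univ] at h
    refine h.trans (le_of_eq ?_)
    refine integral_congr_ae (ae_of_all _ fun ω => ?_)
    simp [hS]
  have hχu_int : ∀ c k, Integrable (fun ω => ∑ j ∈ Finset.range k, χ c j ω * u j ω) μ := by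
    intro c k
    refine integrable_finset_sum _ fun j _ => ?_
    exact (hu_int j).bdd_mul (c := 1) (hχ_meas0 c j) (ae_of_all _ fun ω => by
      rw [Real.norm_eq_abs, abs_of_nonneg (hχ_nonneg c j ω)]; exact hχ_le_one c j ω)
  have hsum_le : ∀ c k, ∫ ω, (∑ j ∈ Finset.range k, χ c j ω * u j ω) ∂μ
      ≤ ∫ ω, q 0 ω ∂μ + c := by
    intro c k
    have hle : ∀ ω, (∑ j ∈ Finset.range k, χ c j ω * u j ω) ≤ S c k ω + c := by
      intro ω
      obtain ⟨hble, m, hm⟩ := hkey c k ω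
      have := hq_nonneg m ω
      rw [hm]; linarith
    calc ∫ ω, (∑ j ∈ Finset.range k, χ c j ω * u j ω) ∂μ
        ≤ ∫ ω, (S c k ω + c) ∂μ :=
          integral_mono (hχu_int c k) ((hS_int c k).add (integrable_const _)) hle
      _ = ∫ ω, S c k ω ∂μ + c := by
          rw [integral_add (hS_int c k) (integrable_const _)]; simp
      _ ≤ ∫ ω, q 0 ω ∂μ + c := by linarith [hSint_le c k]
  -- monotone convergence: a.s. summability of the stopped u-series
  have hGmeas : ∀ (c j : ℕ), Measurable fun ω => ENNReal.ofReal (χ c j ω * u j ω) := by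
    intro c j
    exact (((hχ_meas c j).mono (F.le j)).measurable.mul
      (((hu_adapted j).mono (F.le j)).measurable)).ennreal_ofReal
  have hsummable_u : ∀ c : ℕ, ∀ᵐ ω ∂μ, Summable fun j => χ c j ω * u j ω := by
    intro c
    have hlint : ∫⁻ ω, (∑' j, ENNReal.ofReal (χ c j ω * u j ω)) ∂μ
        ≤ ENNReal.ofReal (∫ ω, q 0 ω ∂μ + c) := by
      rw [lintegral_tsum fun j => (hGmeas c j).aemeasurable, ENNReal.tsum_eq_iSup_sum]
      refine iSup_le fun s => ?_
      obtain ⟨k, hk⟩ := s.exists_nat_subset_range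
      refine le_trans (Finset.sum_le_sum_of_subset hk) ?_
      rw [← lintegral_finset_sum _ fun j _ => hGmeas c j]
      have heq : ∀ ω : Ω, (∑ j ∈ Finset.range k, ENNReal.ofReal (χ c j ω * u j ω))
          = ENNReal.ofReal (∑ j ∈ Finset.range k, χ c j ω * u j ω) := fun ω =>
        (ENNReal.ofReal_sum_of_nonneg fun j _ =>
          mul_nonneg (hχ_nonneg c j ω) (hu_nonneg j ω)).symm
      simp_rw [heq]
      rw [← ofReal_integral_eq_lintegral_ofReal (hχu_int c k)
        (ae_of_all _ fun ω => Finset.sum_nonneg fun j _ =>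
          mul_nonneg (hχ_nonneg c j ω) (hu_nonneg j ω))]
      exact ENNReal.ofReal_le_ofReal (hsum_le c k)
    have hmeas : Measurable fun ω => ∑' j, ENNReal.ofReal (χ c j ω * u j ω) :=
      Measurable.ennreal_tsum fun j => hGmeas c j
    have hae : ∀ᵐ ω ∂μ, (∑' j, ENNReal.ofReal (χ c j ω * u j ω)) < ⊤ :=
      ae_lt_top hmeas (lt_of_le_of_lt hlint ENNReal.ofReal_lt_top).ne
    filter_upwards [hae] with ω hω
    refine (ENNReal.summable_toReal hω.ne).congr fun j => ?_
    exact ENNReal.toReal_ofReal (mul_nonneg (hχ_nonneg c j ω) (hu_nonneg j ω))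
  -- a.s. convergence of the stopped supermartingale
  have hconv : ∀ c : ℕ, ∀ᵐ ω ∂μ, ∃ l, Tendsto (fun n => S c n ω) atTop (nhds l) := by
    intro c
    set R : NNReal := (∫ ω, q 0 ω ∂μ + 2*c).toNNReal with hR
    have hbdd : ∀ n, eLpNorm (S c n) 1 μ ≤ (R : ENNReal) := by
      intro n
      have habs : ∀ ω, |S c n ω| ≤ S c n ω + 2*c := by
        intro ω
        have h1 := hS_lb c n ω
        have h2 : (0:ℝ) ≤ c := Nat.cast_nonneg c
        rcases abs_cases (S c n ω) with ⟨h, _⟩ | ⟨h, _⟩ <;> linarith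
      have hnn : 0 ≤ᵐ[μ] fun ω => S c n ω + 2*c := ae_of_all _ fun ω => by
        have h1 := hS_lb c n ω
        have h2 : (0:ℝ) ≤ c := Nat.cast_nonneg c
        simp only [Pi.zero_apply]
        linarith
      rw [eLpNorm_one_eq_lintegral_enorm]
      calc ∫⁻ ω, ‖S c n ω‖₊ ∂μ
          = ∫⁻ ω, ENNReal.ofReal |S c n ω| ∂μ := by
            simp_rw [← enorm_eq_nnnorm, Real.enorm_eq_ofReal_abs]
        _ ≤ ∫⁻ ω, ENNReal.ofReal (S c n ω + 2*c) ∂μ :=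
            lintegral_mono fun ω => ENNReal.ofReal_le_ofReal (habs ω)
        _ = ENNReal.ofReal (∫ ω, (S c n ω + 2*c) ∂μ) :=
            (ofReal_integral_eq_lintegral_ofReal
              ((hS_int c n).add (integrable_const _)) hnn).symm
        _ ≤ ENNReal.ofReal (∫ ω, q 0 ω ∂μ + 2*c) := by
            refine ENNReal.ofReal_le_ofReal ?_
            rw [integral_add (hS_int c n) (integrable_const _)]
            simp only [integral_const, probReal_univ, measure_univ, ENNReal.toReal_one, smul_eq_mul, one_mul]
            linarith [hSint_le c n]
        _ = (R : ENNReal) := rfl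
    have hneg : ∀ n, eLpNorm ((-(S c)) n) 1 μ ≤ (R : ENNReal) := by
      intro n
      rw [show (-(S c)) n = -(S c n) from rfl, eLpNorm_neg]
      exact hbdd n
    have := (hSmart c).neg.exists_ae_tendsto_of_bdd hneg
    filter_upwards [this] with ω ⟨l, hl⟩
    exact ⟨-l, by simpa using hl.neg⟩
  -- assemble
  have hAll : ∀ᵐ ω ∂μ, ∀ c : ℕ, (Summable fun j => χ c j ω * u j ω) ∧
      ∃ l, Tendsto (fun n => S c n ω) atTop (nhds l) :=
    ae_all_iff.2 fun c => (hsummable_u c).and (hconv c)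
  filter_upwards [hb_sum, hAll] with ω hbω hallω
  set c : ℕ := Nat.ceil (∑' j, b j ω) with hc
  have hpart : ∀ k : ℕ, ∑ j ∈ Finset.range (k+1), b j ω ≤ (c:ℝ) := fun k =>
    le_trans (hbω.sum_le_tsum _ (fun j _ => hb_nonneg j ω)) (Nat.le_ceil _)
  have hχ1 : ∀ j, χ c j ω = 1 := fun j => (hχ_one_iff c j ω).2 (hpart j)
  obtain ⟨hsumu, l, hl⟩ := hallω c
  have hsumu' : Summable fun j => u j ω :=
    hsumu.congr fun j => by rw [hχ1 j, one_mul]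
  have hSeq : ∀ k, S c k ω = q k ω + ∑ j ∈ Finset.range k, u j ω
      - ∑ j ∈ Finset.range k, b j ω := by
    intro k
    have h1 : S c k ω = q 0 ω + ∑ j ∈ Finset.range k, D j ω := by
      simp only [hS]
      congr 1
      exact Finset.sum_congr rfl fun j _ => by rw [hχ1 j, one_mul]
    have htel : ∑ j ∈ Finset.range k, (q (j+1) ω - q j ω)
        = q k ω - q 0 ω := Finset.sum_range_sub (fun j => q j ω) k
    have hDs : ∑ j ∈ Finset.range k, D j ω
        = (q k ω - q 0 ω) + ∑ j ∈ Finset.range k, u j ω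
          - ∑ j ∈ Finset.range k, b j ω := by
      rw [← htel, ← Finset.sum_add_distrib, ← Finset.sum_sub_distrib]
    rw [h1, hDs]; ring
  have h2 : Tendsto (fun k => ∑ j ∈ Finset.range k, u j ω) atTop
      (nhds (∑' j, u j ω)) := hsumu'.hasSum.tendsto_sum_nat
  have h3 : Tendsto (fun k => ∑ j ∈ Finset.range k, b j ω) atTop
      (nhds (∑' j, b j ω)) := hbω.hasSum.tendsto_sum_nat
  have hq_tend : Tendsto (fun k => q k ω) atTop
      (nhds (l - ∑' j, u j ω + ∑' j, b j ω)) := by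
    refine ((hl.sub h2).add h3).congr fun k => ?_
    rw [hSeq k]; ring
  exact ⟨hsumu', _, ge_of_tendsto' hq_tend fun k => hq_nonneg k ω, hq_tend⟩

/-- Robbins–Siegmund-type lemma. If nonnegative adapted integrable
sequences `p, u, a, b` satisfy `∑ a_k < ∞` a.s., `∑ b_k < ∞` a.s., and
`E[p_{k+1} | F_k] ≤ (1 + a_k) p_k - u_k + b_k` a.s. for all `k`, then almost surely
`∑ u_k < ∞` and `p_k` converges to a nonnegative random variable `v`. -/
theorem robbins_siegmund
    {Ω : Type*} {m0 : MeasurableSpace Ω} (μ : Measure Ω) [IsProbabilityMeasure μ]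
    (F : Filtration ℕ m0)
    (p u a b : ℕ → Ω → ℝ)
    (hp_adapted : Adapted F p) (hu_adapted : Adapted F u)
    (ha_adapted : Adapted F a) (hb_adapted : Adapted F b)
    (hp_nonneg : ∀ k ω, 0 ≤ p k ω) (hu_nonneg : ∀ k ω, 0 ≤ u k ω)
    (ha_nonneg : ∀ k ω, 0 ≤ a k ω) (hb_nonneg : ∀ k ω, 0 ≤ b k ω)
    (hp_int : ∀ k, Integrable (p k) μ) (hu_int : ∀ k, Integrable (u k) μ)
    (ha_int : ∀ k, Integrable (a k) μ) (hb_int : ∀ k, Integrable (b k) μ)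
    (ha_sum : ∀ᵐ ω ∂μ, Summable fun k => a k ω)
    (hb_sum : ∀ᵐ ω ∂μ, Summable fun k => b k ω)
    (hrec : ∀ k : ℕ, ∀ᵐ ω ∂μ,
      (μ[p (k + 1)|F k]) ω ≤ (1 + a k ω) * p k ω - u k ω + b k ω) :
    (∀ᵐ ω ∂μ, Summable fun k => u k ω) ∧
      ∃ v : Ω → ℝ, ∀ᵐ ω ∂μ, 0 ≤ v ω ∧
        Tendsto (fun k => p k ω) atTop (nhds (v ω)) := by
  classical
  set P : ℕ → Ω → ℝ := fun k ω => ∏ j ∈ Finset.range k, (1 + a j ω) with hP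
  have hP_succ : ∀ (k : ℕ) (ω : Ω), P (k+1) ω = P k ω * (1 + a k ω) := by
    intro k ω; simp [hP, Finset.prod_range_succ]
  have hP_ge1 : ∀ (k : ℕ) (ω : Ω), 1 ≤ P k ω := by
    intro k ω
    induction k with
    | zero => simp [hP]
    | succ k ih =>
      rw [hP_succ k ω]
      nlinarith [ha_nonneg k ω]
  have hP_pos : ∀ (k : ℕ) (ω : Ω), 0 < P k ω := fun k ω =>
    lt_of_lt_of_le one_pos (hP_ge1 k ω)
  have hP_meas : ∀ (k n : ℕ), n ≤ k+1 → StronglyMeasurable[F k] (P n) := by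
    intro k n hn
    refine Finset.stronglyMeasurable_fun_prod _ fun j hj => ?_
    have hjk : j ≤ k := by have := Finset.mem_range.1 hj; omega
    exact stronglyMeasurable_const.add ((ha_adapted j).stronglyMeasurable.mono (F.mono hjk))
  -- normalized processes
  set q : ℕ → Ω → ℝ := fun k ω => (P k ω)⁻¹ * p k ω with hq
  set u' : ℕ → Ω → ℝ := fun k ω => (P (k+1) ω)⁻¹ * u k ω with hu'
  set b' : ℕ → Ω → ℝ := fun k ω => (P (k+1) ω)⁻¹ * b k ω with hb'
  have hinv_meas : ∀ (k n : ℕ), n ≤ k+1 → StronglyMeasurable[F k] fun ω => (P n ω)⁻¹ :=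
    fun k n hn => ((hP_meas k n hn).measurable.inv).stronglyMeasurable
  have hq_adp : StronglyAdapted F q := fun k =>
    (hinv_meas k k (by omega)).mul (hp_adapted k).stronglyMeasurable
  have hu'_adp : StronglyAdapted F u' := fun k => (hinv_meas k (k+1) le_rfl).mul (hu_adapted k).stronglyMeasurable
  have hb'_adp : StronglyAdapted F b' := fun k => (hinv_meas k (k+1) le_rfl).mul (hb_adapted k).stronglyMeasurable
  have hq_nonneg : ∀ k ω, 0 ≤ q k ω := fun k ω =>
    mul_nonneg (inv_nonneg.2 (hP_pos k ω).le) (hp_nonneg k ω)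
  have hu'_nonneg : ∀ k ω, 0 ≤ u' k ω := fun k ω =>
    mul_nonneg (inv_nonneg.2 (hP_pos (k+1) ω).le) (hu_nonneg k ω)
  have hb'_nonneg : ∀ k ω, 0 ≤ b' k ω := fun k ω =>
    mul_nonneg (inv_nonneg.2 (hP_pos (k+1) ω).le) (hb_nonneg k ω)
  have hbound : ∀ (f : ℕ → Ω → ℝ) (hf : ∀ k ω, 0 ≤ f k ω) (n k : ℕ) (ω : Ω),
      (P n ω)⁻¹ * f k ω ≤ f k ω := by
    intro f hf n k ω
    have h1 : (P n ω)⁻¹ ≤ 1 := by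
      rw [inv_le_one_iff₀]; right; exact hP_ge1 n ω
    nlinarith [hf k ω, hP_pos n ω]
  have hq_int : ∀ k, Integrable (q k) μ := by
    intro k
    refine (hp_int k).mono ((hq_adp k).mono (F.le k)).aestronglyMeasurable
      (ae_of_all _ fun ω => ?_)
    rw [Real.norm_eq_abs, Real.norm_eq_abs, abs_of_nonneg (hq_nonneg k ω),
      abs_of_nonneg (hp_nonneg k ω)]
    exact hbound p hp_nonneg k k ω
  have hu'_int : ∀ k, Integrable (u' k) μ := by
    intro k
    refine (hu_int k).mono ((hu'_adp k).mono (F.le k)).aestronglyMeasurable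
      (ae_of_all _ fun ω => ?_)
    rw [Real.norm_eq_abs, Real.norm_eq_abs, abs_of_nonneg (hu'_nonneg k ω),
      abs_of_nonneg (hu_nonneg k ω)]
    exact hbound u hu_nonneg (k+1) k ω
  have hb'_int : ∀ k, Integrable (b' k) μ := by
    intro k
    refine (hb_int k).mono ((hb'_adp k).mono (F.le k)).aestronglyMeasurable
      (ae_of_all _ fun ω => ?_)
    rw [Real.norm_eq_abs, Real.norm_eq_abs, abs_of_nonneg (hb'_nonneg k ω),
      abs_of_nonneg (hb_nonneg k ω)]
    exact hbound b hb_nonneg (k+1) k ω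
  have hb'_sum : ∀ᵐ ω ∂μ, Summable fun k => b' k ω := by
    filter_upwards [hb_sum] with ω hω
    exact Summable.of_nonneg_of_le (fun k => hb'_nonneg k ω)
      (fun k => hbound b hb_nonneg (k+1) k ω) hω
  have hrec' : ∀ k : ℕ, ∀ᵐ ω ∂μ, (μ[q (k + 1)|F k]) ω ≤ q k ω - u' k ω + b' k ω := by
    intro k
    have hmul : μ[q (k+1)|F k] =ᵐ[μ]
        fun ω => (P (k+1) ω)⁻¹ * (μ[p (k+1)|F k]) ω := by
      have := condExp_mul_of_stronglyMeasurable_left (μ := μ) (hinv_meas k (k+1) le_rfl)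
        (show Integrable (fun ω => (P (k+1) ω)⁻¹ * p (k+1) ω) μ from ?_) (hp_int (k+1))
      · exact this
      · refine (hp_int (k+1)).mono ?_ (ae_of_all _ fun ω => ?_)
        · exact (((hinv_meas k (k+1) le_rfl).mono (F.le k)).mul
            ((hp_adapted (k+1)).stronglyMeasurable.mono (F.le (k+1)))).aestronglyMeasurable
        · rw [Real.norm_eq_abs, Real.norm_eq_abs,
            abs_of_nonneg (mul_nonneg (inv_nonneg.2 (hP_pos (k+1) ω).le) (hp_nonneg (k+1) ω)),
            abs_of_nonneg (hp_nonneg (k+1) ω)]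
          exact hbound p hp_nonneg (k+1) (k+1) ω
    filter_upwards [hmul, hrec k] with ω h1 h2
    have hPk := hP_pos k ω
    have hPk1 := hP_pos (k+1) ω
    have ha1 : (0:ℝ) < 1 + a k ω := by nlinarith [ha_nonneg k ω]
    have hexp : (P (k+1) ω)⁻¹ * ((1 + a k ω) * p k ω - u k ω + b k ω)
        = q k ω - u' k ω + b' k ω := by
      show _ = (P k ω)⁻¹ * p k ω - (P (k+1) ω)⁻¹ * u k ω + (P (k+1) ω)⁻¹ * b k ω
      rw [hP_succ k ω]
      field_simp
    rw [h1, ← hexp]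
    exact mul_le_mul_of_nonneg_left h2 (inv_nonneg.2 hPk1.le)
  have main := rs_core μ F q u' b' hq_adp hu'_adp hb'_adp hq_nonneg hu'_nonneg
    hb'_nonneg hq_int hu'_int hb'_int hb'_sum hrec'
  set v : Ω → ℝ := fun ω =>
    if h : ∃ x, Tendsto (fun k => p k ω) atTop (nhds x) then h.choose else 0 with hv
  have key : ∀ᵐ ω ∂μ, (Summable fun k => u k ω) ∧
      ∃ x, 0 ≤ x ∧ Tendsto (fun k => p k ω) atTop (nhds x) := by
    filter_upwards [main, ha_sum] with ω hmain haω
    obtain ⟨hsumu', l, hl0, hql⟩ := hmain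
    -- the product converges
    have hPmono : Monotone fun k => P k ω := monotone_nat_of_le_succ fun k => by
      rw [hP_succ k ω]; nlinarith [ha_nonneg k ω, hP_pos k ω]
    have hPbdd : BddAbove (Set.range fun k => P k ω) := by
      refine ⟨Real.exp (∑' j, a j ω), ?_⟩
      rintro x ⟨k, rfl⟩
      calc P k ω ≤ ∏ j ∈ Finset.range k, Real.exp (a j ω) :=
            Finset.prod_le_prod (fun j _ => by nlinarith [ha_nonneg j ω])
              (fun j _ => by
                have := Real.add_one_le_exp (a j ω); linarith)
        _ = Real.exp (∑ j ∈ Finset.range k, a j ω) := by rw [← Real.exp_sum]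
        _ ≤ Real.exp (∑' j, a j ω) := Real.exp_le_exp.2
            (haω.sum_le_tsum _ (fun j _ => ha_nonneg j ω))
    set L : ℝ := ⨆ k, P k ω with hL
    have hPL : Tendsto (fun k => P k ω) atTop (nhds L) :=
      tendsto_atTop_ciSup hPmono hPbdd
    have hkL : ∀ k, P k ω ≤ L := fun k => le_ciSup hPbdd k
    constructor
    · refine Summable.of_nonneg_of_le (fun k => hu_nonneg k ω)
        (fun k => ?_) (hsumu'.mul_left L)
      have : u k ω = P (k+1) ω * u' k ω := by
        simp only [hu']
        field_simp
        exact (mul_div_cancel_right₀ _ (hP_pos (k+1) ω).ne').symm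
      rw [this]
      have h1 := hu'_nonneg k ω
      have h2 := hkL (k+1)
      nlinarith
    · have hL0 : (0:ℝ) ≤ L := le_trans (le_trans zero_le_one (hP_ge1 0 ω)) (hkL 0)
      refine ⟨L * l, mul_nonneg hL0 hl0, ?_⟩
      refine (hPL.mul hql).congr fun k => ?_
      simp only [hq]
      field_simp
      exact mul_div_cancel_left₀ _ (hP_pos k ω).ne' 
  refine ⟨key.mono fun ω h => h.1, v, key.mono fun ω h => ?_⟩
  obtain ⟨-, x, hx0, hx⟩ := h
  have hex : ∃ y, Tendsto (fun k => p k ω) atTop (nhds y) := ⟨x, hx⟩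
  have hvx : v ω = hex.choose := by rw [hv]; simp only [dif_pos hex]
  have hxeq : x = hex.choose := tendsto_nhds_unique hx hex.choose_spec
  rw [hvx]
  exact ⟨hxeq ▸ hx0, hex.choose_spec⟩
end

section
/- Let g : ℝ^d → ℝ be l_g-Lipschitz and bounded with |g(z)| ≤ C_g for all z. Let Λ̄ ≥ 0, let λ, λ* ∈ [0, Λ̄], let y, x̄ ∈ ℝ^d, let γ > 0, and set λ⁺ = Π_{[0,Λ̄]}(λ + γ g(y)), the projection of λ + γ g(y) onto the interval [0, Λ̄]. Then (λ⁺ − λ*)² ≤ (λ − λ*)² + 2γ l_g |λ − λ*| · ‖y − x̄‖ + γ² C_g² + 2γ(λ − λ*) g(x̄). -/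
/-- One dual (clamped-gradient-ascent) step inequality: with
`λ⁺ = Π_{[0,Λ̄]}(λ + γ g(y))` for an `l_g`-Lipschitz function `g` bounded by `C_g`,
and `λ, λ* ∈ [0, Λ̄]`,
`(λ⁺ - λ*)² ≤ (λ - λ*)² + 2γ l_g |λ - λ*| ‖y - x̄‖ + γ² C_g² + 2γ(λ - λ*) g(x̄)`. -/
theorem dual_step_inequality {d : ℕ}
    (g : EuclideanSpace ℝ (Fin d) → ℝ) (lg : NNReal) (Cg : ℝ)
    (hglip : LipschitzWith lg g) (hgbd : ∀ z, |g z| ≤ Cg)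
    (Λbar : ℝ) (hΛ : 0 ≤ Λbar)
    (lam lamstar : ℝ) (hlam : lam ∈ Set.Icc 0 Λbar) (hlamstar : lamstar ∈ Set.Icc 0 Λbar)
    (y xbar : EuclideanSpace ℝ (Fin d)) (γ : ℝ) (hγ : 0 < γ) :
    (max 0 (min Λbar (lam + γ * g y)) - lamstar) ^ 2 ≤
      (lam - lamstar) ^ 2 + 2 * γ * lg * |lam - lamstar| * ‖y - xbar‖
        + γ ^ 2 * Cg ^ 2 + 2 * γ * (lam - lamstar) * g xbar := by
  obtain ⟨hl0, hl1⟩ := hlam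
  obtain ⟨hs0, hs1⟩ := hlamstar
  set a := lam + γ * g y with ha
  -- projection step is nonexpansive
  have hproj : (max 0 (min Λbar a) - lamstar) ^ 2 ≤ (a - lamstar) ^ 2 := by
    rcases le_total a 0 with h0 | h0
    · rcases le_total Λbar a with h1 | h1 <;>
      · rw [min_eq_right (by linarith), max_eq_left (by linarith)]
        nlinarith
    rcases le_total Λbar a with h1 | h1
    · rw [min_eq_left h1, max_eq_right (by linarith)]
      nlinarith
    · rw [min_eq_right h1, max_eq_right h0]
  -- Lipschitz bound
  have hlip : |g y - g xbar| ≤ (lg : ℝ) * ‖y - xbar‖ := by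
    have := hglip.dist_le_mul y xbar
    rwa [Real.dist_eq, dist_eq_norm] at this
  have hbd := hgbd y
  have h1 : (lam - lamstar) * (g y - g xbar) ≤ |lam - lamstar| * ((lg : ℝ) * ‖y - xbar‖) := by
    calc (lam - lamstar) * (g y - g xbar) ≤ |(lam - lamstar) * (g y - g xbar)| := le_abs_self _
    _ = |lam - lamstar| * |g y - g xbar| := abs_mul _ _
    _ ≤ |lam - lamstar| * ((lg : ℝ) * ‖y - xbar‖) := by
        exact mul_le_mul_of_nonneg_left hlip (abs_nonneg _)
  have h2 : (g y) ^ 2 ≤ Cg ^ 2 := by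
    have := abs_nonneg (g y)
    nlinarith [sq_abs (g y)]
  have hexp : (a - lamstar) ^ 2
      = (lam - lamstar) ^ 2 + 2 * γ * ((lam - lamstar) * (g y - g xbar))
        + γ ^ 2 * (g y) ^ 2 + 2 * γ * (lam - lamstar) * g xbar := by
    rw [ha]; ring
  rw [hexp] at hproj
  nlinarith [hproj, mul_le_mul_of_nonneg_left h1 (by positivity : (0:ℝ) ≤ 2 * γ),
    mul_le_mul_of_nonneg_left h2 (sq_nonneg γ)]
end

section
/- Let θ > 0 and for x ∈ ℝ let μ_x denote the law of the element-wise stochastic quantizer with scale θ applied to x, i.e., the probability measure on ℝ assigning mass max(0, 1 − |x − q|/θ) to each point q ∈ θℤ. Then for all x, x' ∈ ℝ, the total variation distance between μ_x and μ_{x'} is at most |x − x'|/θ; in particular, for every set O ⊆ θℤ of output values, μ_x(O) ≤ μ_{x'}(O) + |x − x'|/θ, so a single quantization step is (0, δ)-differentially private with δ = |x − x'|/θ. -/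
open MeasureTheory
open Set

lemma ofReal_max_zero (t : ℝ) : ENNReal.ofReal (max 0 t) = ENNReal.ofReal t := by
  rcases le_total t 0 with h | h
  · rw [max_eq_left h, ENNReal.ofReal_of_nonpos h, ENNReal.ofReal_zero]
  · rw [max_eq_right h]

lemma tent_vol (u : ℝ) (m : ℤ) :
    ENNReal.ofReal (max 0 (1 - |u - m|)) =
      volume (Ioc (u-1) u ∩ Ioc ((m:ℝ)-1) m) := by
  rw [Set.Ioc_inter_Ioc, Real.volume_Ioc, ofReal_max_zero]
  congr 1
  rcases le_total u (m:ℝ) with h | h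
  · rw [abs_of_nonpos (by linarith), min_eq_left h,
      max_eq_right (by linarith : u - 1 ≤ (m:ℝ)-1)]
    ring
  · rw [abs_of_nonneg (by linarith), min_eq_right h,
      max_eq_left (by linarith : (m:ℝ) - 1 ≤ u-1)]
    ring

lemma cells_cover : (⋃ m : ℤ, Ioc ((m:ℝ)-1) m) = univ := by
  ext t
  simp only [mem_iUnion, mem_Ioc, mem_univ, iff_true]
  exact ⟨⌈t⌉, by have := Int.ceil_lt_add_one t; linarith, Int.le_ceil t⟩

lemma cells_disjoint : Pairwise (Function.onFun Disjoint fun m : ℤ => Ioc ((m:ℝ)-1) m) := by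
  intro m n hmn
  simp only [Function.onFun, Set.disjoint_left]
  intro t ht ht'
  apply hmn
  have h1 : (n:ℝ) - 1 < m := lt_of_lt_of_le ht'.1 ht.2
  have h2 : (m:ℝ) - 1 < n := lt_of_lt_of_le ht.1 ht'.2
  have : n - 1 < m := by exact_mod_cast (by linarith : ((n:ℤ):ℝ) - 1 < m)
  have : m - 1 < n := by exact_mod_cast (by linarith : ((m:ℤ):ℝ) - 1 < n)
  omega

lemma sum_cells (S : Set ℝ) (hS : MeasurableSet S) :
    ∑' m : ℤ, volume (S ∩ Ioc ((m:ℝ)-1) m) = volume S := by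
  rw [← measure_iUnion (fun m n hmn => (cells_disjoint hmn).mono
      inter_subset_right inter_subset_right)
      (fun m => hS.inter measurableSet_Ioc)]
  rw [← inter_iUnion, cells_cover, inter_univ]


/-- The law of the element-wise stochastic quantizer with scale `θ` applied to input `x`:
the probability measure on `ℝ` assigning mass `max 0 (1 - |x - q|/θ)` to each
quantization level `q = mθ`, `m ∈ ℤ`. -/
noncomputable def quantizerLaw (θ x : ℝ) : Measure ℝ :=
  Measure.sum fun m : ℤ =>
    ENNReal.ofReal (max 0 (1 - |x - (m : ℝ) * θ| / θ)) • Measure.dirac ((m : ℝ) * θ)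

lemma quantizerLaw_apply (θ x : ℝ) {O : Set ℝ} (hO : MeasurableSet O) :
    quantizerLaw θ x O =
      ∑' m : ℤ, ENNReal.ofReal (max 0 (1 - |x - (m:ℝ) * θ| / θ))
        * O.indicator 1 ((m:ℝ) * θ) := by
  rw [quantizerLaw, Measure.sum_apply _ hO]
  congr 1; ext m
  rw [Measure.smul_apply, smul_eq_mul, Measure.dirac_apply' _ hO]

lemma tent_eq (θ : ℝ) (hθ : 0 < θ) (x : ℝ) (m : ℤ) :
    ENNReal.ofReal (max 0 (1 - |x - (m:ℝ) * θ| / θ)) =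
      volume (Ioc (x/θ - 1) (x/θ) ∩ Ioc ((m:ℝ)-1) m) := by
  rw [← tent_vol]
  congr 3
  rw [show x - (m:ℝ) * θ = (x/θ - m) * θ by field_simp, abs_mul, abs_of_pos hθ,
    mul_div_cancel_right₀ _ (ne_of_gt hθ)]

lemma key (θ : ℝ) (hθ : 0 < θ) (x x' : ℝ) {O : Set ℝ} (hO : MeasurableSet O) :
    quantizerLaw θ x O ≤ quantizerLaw θ x' O + ENNReal.ofReal (|x - x'| / θ) := by
  set u := x / θ with hu
  set u' := x' / θ with hu'
  set A := Ioc (u - 1) u with hA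
  set B := Ioc (u' - 1) u' with hB
  have hABm : MeasurableSet (A \ B) := measurableSet_Ioc.diff measurableSet_Ioc
  -- pointwise bound
  have hpt : ∀ m : ℤ,
      ENNReal.ofReal (max 0 (1 - |x - (m:ℝ) * θ| / θ)) * O.indicator 1 ((m:ℝ) * θ)
      ≤ ENNReal.ofReal (max 0 (1 - |x' - (m:ℝ) * θ| / θ)) * O.indicator 1 ((m:ℝ) * θ)
        + volume ((A \ B) ∩ Ioc ((m:ℝ)-1) m) := by
    intro m
    rw [tent_eq θ hθ x m, tent_eq θ hθ x' m]
    have hsub : A ∩ Ioc ((m:ℝ)-1) m ⊆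
        (B ∩ Ioc ((m:ℝ)-1) m) ∪ ((A \ B) ∩ Ioc ((m:ℝ)-1) m) := by
      intro t ⟨htA, htC⟩
      by_cases h : t ∈ B
      · exact Or.inl ⟨h, htC⟩
      · exact Or.inr ⟨⟨htA, h⟩, htC⟩
    have h1 : volume (A ∩ Ioc ((m:ℝ)-1) m) ≤
        volume (B ∩ Ioc ((m:ℝ)-1) m) + volume ((A \ B) ∩ Ioc ((m:ℝ)-1) m) :=
      le_trans (measure_mono hsub) (measure_union_le _ _)
    have hind : O.indicator (1 : ℝ → ENNReal) ((m:ℝ) * θ) ≤ 1 := by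
      classical
      by_cases h : (m:ℝ) * θ ∈ O <;> simp [Set.indicator, h]
    calc volume (A ∩ Ioc ((m:ℝ)-1) m) * O.indicator 1 ((m:ℝ) * θ)
        ≤ (volume (B ∩ Ioc ((m:ℝ)-1) m) + volume ((A \ B) ∩ Ioc ((m:ℝ)-1) m))
            * O.indicator 1 ((m:ℝ) * θ) := mul_le_mul_left h1 _
      _ = volume (B ∩ Ioc ((m:ℝ)-1) m) * O.indicator 1 ((m:ℝ) * θ)
            + volume ((A \ B) ∩ Ioc ((m:ℝ)-1) m) * O.indicator 1 ((m:ℝ) * θ) := by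
          ring
      _ ≤ _ := by
          gcongr
          exact le_trans (mul_le_mul_right hind _) (by simp)
  have hdiff : volume (A \ B) ≤ ENNReal.ofReal (|x - x'| / θ) := by
    have habs : |x - x'| / θ = |u - u'| := by
      rw [hu, hu', div_sub_div_same, abs_div, abs_of_pos hθ]
    rw [habs]
    rcases le_total u' u with h | h
    · have : A \ B ⊆ Ioc u' u := by
        intro t ⟨⟨ht1, ht2⟩, htB⟩
        refine ⟨?_, ht2⟩
        by_contra hc
        push_neg at hc
        exact htB ⟨by linarith, hc⟩
      calc volume (A \ B) ≤ volume (Ioc u' u) := measure_mono this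
        _ = ENNReal.ofReal (u - u') := Real.volume_Ioc
        _ = ENNReal.ofReal |u - u'| := by rw [abs_of_nonneg (by linarith)]
    · have : A \ B ⊆ Ioc (u-1) (u'-1) := by
        intro t ⟨⟨ht1, ht2⟩, htB⟩
        refine ⟨ht1, ?_⟩
        by_contra hc
        push_neg at hc
        exact htB ⟨by linarith, by linarith⟩
      calc volume (A \ B) ≤ volume (Ioc (u-1) (u'-1)) := measure_mono this
        _ = ENNReal.ofReal (u' - 1 - (u - 1)) := Real.volume_Ioc
        _ = ENNReal.ofReal |u - u'| := by
            rw [abs_of_nonpos (by linarith)]; ring_nf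
  calc quantizerLaw θ x O
      = ∑' m : ℤ, ENNReal.ofReal (max 0 (1 - |x - (m:ℝ) * θ| / θ))
          * O.indicator 1 ((m:ℝ) * θ) := quantizerLaw_apply θ x hO
    _ ≤ ∑' m : ℤ, (ENNReal.ofReal (max 0 (1 - |x' - (m:ℝ) * θ| / θ))
          * O.indicator 1 ((m:ℝ) * θ) + volume ((A \ B) ∩ Ioc ((m:ℝ)-1) m)) :=
        ENNReal.tsum_le_tsum hpt
    _ = (∑' m : ℤ, ENNReal.ofReal (max 0 (1 - |x' - (m:ℝ) * θ| / θ))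
          * O.indicator 1 ((m:ℝ) * θ)) + ∑' m : ℤ, volume ((A \ B) ∩ Ioc ((m:ℝ)-1) m) :=
        ENNReal.tsum_add
    _ = quantizerLaw θ x' O + volume (A \ B) := by
        rw [← quantizerLaw_apply θ x' hO, sum_cells _ hABm]
    _ ≤ quantizerLaw θ x' O + ENNReal.ofReal (|x - x'| / θ) := by gcongr

/-- The total variation distance between the quantizer laws for inputs
`x` and `x'` is at most `|x - x'|/θ`: for every measurable observation set `O`,
`μ_x(O) ≤ μ_{x'}(O) + |x - x'|/θ`, and likewise for every set `O ⊆ θℤ` of output values.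
Hence a single quantization step is `(0, δ)`-differentially private with
`δ = |x - x'|/θ`. -/
theorem quantizer_differential_privacy (θ : ℝ) (hθ : 0 < θ) (x x' : ℝ) :
    (∀ O : Set ℝ, MeasurableSet O →
      quantizerLaw θ x O ≤ quantizerLaw θ x' O + ENNReal.ofReal (|x - x'| / θ)) ∧
    (∀ O : Set ℝ, O ⊆ {y | ∃ m : ℤ, y = (m : ℝ) * θ} →
      quantizerLaw θ x O ≤ quantizerLaw θ x' O + ENNReal.ofReal (|x - x'| / θ)) := by
  refine ⟨fun O hO => key θ hθ x x' hO, fun O hO => ?_⟩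
  have hcnt : O.Countable := by
    have : {y : ℝ | ∃ m : ℤ, y = (m : ℝ) * θ}.Countable := by
      have : {y : ℝ | ∃ m : ℤ, y = (m : ℝ) * θ} = Set.range (fun m : ℤ => (m : ℝ) * θ) := by
        ext y; simp [eq_comm]
      rw [this]; exact Set.countable_range _
    exact this.mono hO
  exact key θ hθ x x' hcnt.measurableSet
end
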